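/- arXiv:2204.09136 — 6 statements merged into one kernel-verified Lean document; each statement's English description precedes it below -/
import Mathlib

section
/- If u, v ∈ {0,1}^n are vectors with |u| = |v| = n/2 and Hamming distance HAM(u,v) ≥ n/10, then for 0 ≤ p < 1 there exists a constant C_p > 1 such that C_p · ‖2u‖_p^p ≤ ‖u+v‖_p^p, where ‖x‖_p^p = Σ_i |x_i|^p (with the convention 0^0 = 0 for p = 0, i.e., F_0 counts nonzero coordinates). -/
/-- For `0 ≤ p < 1` there is a constant `C_p > 1` such that for all
0/1 vectors `u, v ∈ {0,1}^n` with exactly `n/2` ones each and Hamming distance at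
least `n/10`, we have `C_p · ‖2u‖_p^p ≤ ‖u+v‖_p^p`, where `‖x‖_p^p = Σ_i x_i^p`
with the convention `0^0 = 0` (so `p = 0` counts nonzero coordinates). -/
theorem stmt_1 (p : ℝ) (hp0 : 0 ≤ p) (hp1 : p < 1) :
    ∃ C : ℝ, 1 < C ∧
      ∀ (n : ℕ) (u v : Fin n → ℕ),
        (∀ i, u i ≤ 1) → (∀ i, v i ≤ 1) →
        2 * (∑ i, u i) = n → 2 * (∑ i, v i) = n →
        n ≤ 10 * ({i | u i ≠ v i} : Set (Fin n)).ncard →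
        C * (∑ i, if 2 * u i = 0 then (0 : ℝ) else ((2 * u i : ℕ) : ℝ) ^ p) ≤
          ∑ i, if u i + v i = 0 then (0 : ℝ) else ((u i + v i : ℕ) : ℝ) ^ p := by
  have h2p : (0:ℝ) < (2:ℝ) ^ p := Real.rpow_pos_of_pos two_pos p
  have hlt : (2:ℝ) ^ p < 2 := by
    calc (2:ℝ) ^ p < (2:ℝ) ^ (1:ℝ) :=
          Real.rpow_lt_rpow_of_exponent_lt (by norm_num) hp1
    _ = 2 := Real.rpow_one 2
  set ε : ℝ := (2 - 2 ^ p) / (10 * 2 ^ p) with hε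
  have hεpos : 0 < ε := by
    apply div_pos (by linarith) (by linarith)
  refine ⟨1 + ε, by linarith, ?_⟩
  intro n u v hu hv hsu hsv hd
  -- LHS sum
  have hL : (∑ i, if 2 * u i = 0 then (0 : ℝ) else ((2 * u i : ℕ) : ℝ) ^ p)
      = 2 ^ p * ∑ i, (u i : ℝ) := by
    rw [Finset.mul_sum]
    apply Finset.sum_congr rfl
    intro i _
    have := hu i
    interval_cases u i <;> simp
  -- RHS sum decomposition
  have hR : (∑ i, if u i + v i = 0 then (0 : ℝ) else ((u i + v i : ℕ) : ℝ) ^ p)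
      = 2 ^ p / 2 * (∑ i, ((u i : ℝ) + (v i : ℝ)))
        + (1 - 2 ^ p / 2) * ∑ i, (if u i = v i then (0:ℝ) else 1) := by
    rw [Finset.mul_sum, Finset.mul_sum, ← Finset.sum_add_distrib]
    apply Finset.sum_congr rfl
    intro i _
    have := hu i
    have := hv i
    interval_cases u i <;> interval_cases v i <;>
      simp <;> push_cast <;> ring_nf <;>
      simp [Real.rpow_natCast] <;> ring
  -- counting the disagreement set
  have hD : (∑ i, (if u i = v i then (0:ℝ) else 1))
      = (({i | u i ≠ v i} : Set (Fin n)).ncard : ℝ) := by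
    have h1 : (∑ i, (if u i = v i then (0:ℝ) else 1))
        = ((Finset.univ.filter (fun i => ¬ u i = v i)).card : ℝ) := by
      simp [Finset.sum_ite]
    rw [h1, Set.ncard_eq_toFinset_card']
    congr 2
    ext i
    simp
  set D : ℕ := ({i | u i ≠ v i} : Set (Fin n)).ncard with hDdef
  have hsum_u : (2:ℝ) * ∑ i, (u i : ℝ) = n := by
    exact_mod_cast congrArg (fun k : ℕ => (k:ℝ)) hsu
  have hsum_v : (2:ℝ) * ∑ i, (v i : ℝ) = n := by
    exact_mod_cast congrArg (fun k : ℕ => (k:ℝ)) hsv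
  have hsum_uv : (∑ i, ((u i : ℝ) + (v i : ℝ))) = n := by
    rw [Finset.sum_add_distrib]; linarith
  have hdR : (n:ℝ) ≤ 10 * (D:ℝ) := by exact_mod_cast hd
  rw [hL, hR, hD, hsum_uv]
  have key : ε * (2 ^ p * ((n:ℝ)/2)) = (2 - 2^p) * ((n:ℝ)/(10 * 2)) := by
    rw [hε]; field_simp
  have h1 : (1 - 2 ^ p / 2) * ((n:ℝ)/10) ≤ (1 - 2 ^ p / 2) * (D:ℝ) := by
    apply mul_le_mul_of_nonneg_left _ (by linarith)
    linarith
  have hsueq : ∑ i, (u i : ℝ) = (n:ℝ)/2 := by linarith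
  rw [hsueq]
  nlinarith [key, h1]
end

section
/- Let {I(t)}_{t=1}^{n+1} be a family of sets of closed integer intervals satisfying properties (i)-(iii) of the interval family axioms (I(1) = {[1,1]}; intervals persist under containment into later times; and shifting by +1 into the next time), and additionally each I(t) consists of maximal intervals. Call k exceptional at time t if k is present at time t but k+1 is absent at time t+1. For h ≥ 1 let φ_h be the number of times t ∈ {1,...,n} at which some count 1 ≤ k ≤ h is exceptional. If (φ_h + 1)·h ≤ n, then there exists t₀ ∈ {1,...,n+1} with |I(t₀)| ≥ h+1. -/
/-- For a family `{I(t)}_{t=1}^{n+1}` of finite sets of maximal closed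
integer intervals satisfying the three interval-family axioms, let `φ_h` be the
number of times `t ∈ {1,…,n}` at which some count `1 ≤ k ≤ h` is exceptional
(present at time `t` but `k+1` absent at time `t+1`). If `(φ_h + 1)·h ≤ n`,
then there exists `t₀ ∈ {1,…,n+1}` with `|I(t₀)| ≥ h + 1`. -/
theorem stmt_4 (n h : ℕ) (hh : 1 ≤ h) (I : ℕ → Finset (ℕ × ℕ))
    (hvalid : ∀ t kl, kl ∈ I t → 1 ≤ kl.1 ∧ kl.1 ≤ kl.2)
    (h1 : I 1 = {(1, 1)})
    (h2 : ∀ t t' : ℕ, 1 ≤ t → t ≤ t' → ∀ k ℓ, (k, ℓ) ∈ I t →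
      ∃ k' ℓ', (k', ℓ') ∈ I t' ∧ k' ≤ k ∧ ℓ ≤ ℓ')
    (h3 : ∀ t : ℕ, 1 ≤ t → ∀ k ℓ, (k, ℓ) ∈ I t →
      ∃ k' ℓ', (k', ℓ') ∈ I (t + 1) ∧ k' ≤ k + 1 ∧ ℓ + 1 ≤ ℓ')
    (hmax : ∀ t k ℓ k' ℓ', (k, ℓ) ∈ I t → (k', ℓ') ∈ I t →
      k' ≤ k → ℓ ≤ ℓ' → k = k' ∧ ℓ = ℓ')
    (hφ : (({t | 1 ≤ t ∧ t ≤ n ∧ ∃ k, 1 ≤ k ∧ k ≤ h ∧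
        (∃ ℓ, (k, ℓ) ∈ I t) ∧ ¬ ∃ ℓ, (k + 1, ℓ) ∈ I (t + 1)} : Set ℕ).ncard + 1) * h ≤ n) :
    ∃ t₀, 1 ≤ t₀ ∧ t₀ ≤ n + 1 ∧ h + 1 ≤ (I t₀).card := by
  classical
  set E : Set ℕ := {t | 1 ≤ t ∧ t ≤ n ∧ ∃ k, 1 ≤ k ∧ k ≤ h ∧
      (∃ ℓ, (k, ℓ) ∈ I t) ∧ ¬ ∃ ℓ, (k + 1, ℓ) ∈ I (t + 1)} with hE
  have hEfin : E.Finite := (Set.finite_Icc 1 n).subset (fun t ht => ⟨ht.1, ht.2.1⟩)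
  set φ := E.ncard with hφdef
  -- count 1 is present at every time ≥ 1
  have present1 : ∀ t, 1 ≤ t → ∃ ℓ, (1, ℓ) ∈ I t := by
    intro t ht
    obtain ⟨k', ℓ', hmem, hk', _⟩ := h2 1 t le_rfl ht 1 1 (by rw [h1]; simp)
    have hk1 := (hvalid t (k', ℓ') hmem).1
    have hk'eq : k' = 1 := le_antisymm hk' hk1
    exact ⟨ℓ', by rwa [hk'eq] at hmem⟩
  -- step lemma
  have step : ∀ s k, s ∉ E → 1 ≤ s → s ≤ n → 1 ≤ k → k ≤ h →
      (∃ ℓ, (k, ℓ) ∈ I s) → ∃ ℓ, (k + 1, ℓ) ∈ I (s + 1) := by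
    intro s k hsE hs1 hsn hk1 hkh hpres
    by_contra habs
    exact hsE ⟨hs1, hsn, k, hk1, hkh, hpres, habs⟩
  -- pigeonhole: some window [i*h+1, (i+1)*h] avoids E
  have hwin : ∃ i, i ≤ φ ∧ ∀ s, i * h + 1 ≤ s → s ≤ (i + 1) * h → s ∉ E := by
    by_contra hcon
    push_neg at hcon
    have hc : ∀ i : ℕ, ∃ s, i ≤ φ → (i * h + 1 ≤ s ∧ s ≤ (i + 1) * h ∧ s ∈ E) := by
      intro i
      by_cases hi : i ≤ φ
      · obtain ⟨s, hs1, hs2, hs3⟩ := hcon i hi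
        exact ⟨s, fun _ => ⟨hs1, hs2, hs3⟩⟩
      · exact ⟨0, fun hi' => absurd hi' hi⟩
    choose f hf using hc
    have hcard : (Finset.range (φ + 1)).card ≤ hEfin.toFinset.card := by
      apply Finset.card_le_card_of_injOn f
      · intro i hi
        simp only [Finset.mem_coe, Finset.mem_range] at hi
        exact (Set.Finite.mem_toFinset hEfin).mpr (hf i (Nat.lt_succ_iff.mp hi)).2.2
      · intro i hi j hj heq
        simp only [Finset.mem_coe, Finset.mem_range] at hi hj
        obtain ⟨ha1, ha2, _⟩ := hf i (Nat.lt_succ_iff.mp hi)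
        obtain ⟨hb1, hb2, _⟩ := hf j (Nat.lt_succ_iff.mp hj)
        have hij : i * h < (j + 1) * h := by
          calc i * h < i * h + 1 := Nat.lt_succ_self _
            _ ≤ f i := ha1
            _ = f j := heq
            _ ≤ (j + 1) * h := hb2
        have hji : j * h < (i + 1) * h := by
          calc j * h < j * h + 1 := Nat.lt_succ_self _
            _ ≤ f j := hb1
            _ = f i := heq.symm
            _ ≤ (i + 1) * h := ha2
        have e1 : i < j + 1 := Nat.lt_of_mul_lt_mul_right hij
        have e2 : j < i + 1 := Nat.lt_of_mul_lt_mul_right hji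
        omega
    rw [Finset.card_range] at hcard
    have : hEfin.toFinset.card = φ := (Set.ncard_eq_toFinset_card E hEfin).symm
    omega
  obtain ⟨i, hiφ, hclear⟩ := hwin
  have hmul : (i + 1) * h = i * h + h := by ring
  have htn : (i + 1) * h ≤ n := by
    calc (i + 1) * h ≤ (φ + 1) * h := Nat.mul_le_mul_right h (by omega)
      _ ≤ n := hφ
  -- induction along the window
  have key : ∀ j, j ≤ h → ∀ k, 1 ≤ k → k ≤ j + 1 → ∃ ℓ, (k, ℓ) ∈ I (i * h + 1 + j) := by
    intro j
    induction j with
    | zero =>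
      intro _ k hk1 hk2
      have hk : k = 1 := by omega
      subst hk
      exact present1 _ (by omega)
    | succ m ih =>
      intro hm k hk1 hk2
      by_cases hk : k = 1
      · subst hk; exact present1 _ (by omega)
      · have hpres := ih (by omega) (k - 1) (by omega) (by omega)
        have hnotE : i * h + 1 + m ∉ E := hclear _ (by omega) (by omega)
        obtain ⟨ℓ, hℓ⟩ := step (i * h + 1 + m) (k - 1) hnotE (by omega) (by omega)
          (by omega) (by omega) hpres
        have e1 : k - 1 + 1 = k := by omega
        have e2 : i * h + 1 + m + 1 = i * h + 1 + (m + 1) := by omega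
        rw [e1, e2] at hℓ
        exact ⟨ℓ, hℓ⟩
  have hall : ∀ k, 1 ≤ k → k ≤ h + 1 → ∃ ℓ, (k, ℓ) ∈ I (i * h + 1 + h) := key h le_rfl
  set t₀ := i * h + 1 + h with ht₀
  have hp : ∀ k : ℕ, ∃ ℓ, (1 ≤ k ∧ k ≤ h + 1) → (k, ℓ) ∈ I t₀ := by
    intro k
    by_cases hk : 1 ≤ k ∧ k ≤ h + 1
    · obtain ⟨ℓ, hℓ⟩ := hall k hk.1 hk.2
      exact ⟨ℓ, fun _ => hℓ⟩
    · exact ⟨0, fun hk' => absurd hk' hk⟩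
  choose g hg using hp
  have hcard : (Finset.Icc 1 (h + 1)).card ≤ (I t₀).card := by
    apply Finset.card_le_card_of_injOn (fun k => (k, g k))
    · intro k hk
      simp only [Finset.mem_coe, Finset.mem_Icc] at hk
      exact hg k hk
    · intro a _ b _ hab
      simpa using congrArg Prod.fst hab
  refine ⟨t₀, by omega, by omega, ?_⟩
  simpa [Nat.card_Icc] using hcard
end

section
/- Let {I(t)}_{t≥1} be a family of sets of maximal closed integer intervals satisfying (i) I(1) = {[1,1]}; (ii) for t' ≥ t every interval of I(t) is contained in some interval of I(t'); (iii) for every [k,ℓ] ∈ I(t) some interval of I(t+1) contains [k+1, ℓ+1]. Suppose k is exceptional (present at time t but k+1 absent at time t+1) at each time t ∈ E for a nonempty finite set E of times. Then for all t > max(E), there exists an interval in I(t) containing k whose right endpoint is at least k + |E|. -/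
/-- For a family of sets of maximal closed integer intervals
satisfying the three interval-family axioms, if `k` is exceptional (present at
time `t` but `k+1` absent at time `t+1`) at every time `t ∈ E` for a nonempty
finite set `E` of times (all ≥ 1), then for all `t > max(E)` there is an
interval of `I(t)` containing `k` whose right endpoint is at least `k + |E|`. -/
theorem stmt_5 (I : ℕ → Set (ℕ × ℕ)) (k : ℕ)
    (hvalid : ∀ t kl, kl ∈ I t → 1 ≤ kl.1 ∧ kl.1 ≤ kl.2)
    (h1 : I 1 = {(1, 1)})
    (h2 : ∀ t t' : ℕ, 1 ≤ t → t ≤ t' → ∀ a b, (a, b) ∈ I t →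
      ∃ a' b', (a', b') ∈ I t' ∧ a' ≤ a ∧ b ≤ b')
    (h3 : ∀ t : ℕ, 1 ≤ t → ∀ a b, (a, b) ∈ I t →
      ∃ a' b', (a', b') ∈ I (t + 1) ∧ a' ≤ a + 1 ∧ b + 1 ≤ b')
    (hmax : ∀ t a b a' b', (a, b) ∈ I t → (a', b') ∈ I t →
      a' ≤ a → b ≤ b' → a = a' ∧ b = b')
    (E : Finset ℕ) (hE : E.Nonempty) (hE1 : ∀ s ∈ E, 1 ≤ s)
    (hexc : ∀ t ∈ E, (∃ ℓ, (k, ℓ) ∈ I t) ∧ ¬ ∃ ℓ, (k + 1, ℓ) ∈ I (t + 1)) :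
    ∀ t, E.max' hE < t →
      ∃ a b, (a, b) ∈ I t ∧ a ≤ k ∧ k ≤ b ∧ k + E.card ≤ b := by
  suffices H : ∀ n (E : Finset ℕ) (hE : E.Nonempty), E.card = n →
      (∀ s ∈ E, 1 ≤ s) →
      (∀ t ∈ E, (∃ ℓ, (k, ℓ) ∈ I t) ∧ ¬ ∃ ℓ, (k + 1, ℓ) ∈ I (t + 1)) →
      ∀ t, E.max' hE < t → ∃ a b, (a, b) ∈ I t ∧ a ≤ k ∧ k ≤ b ∧ k + n ≤ b by
    intro t ht
    exact H E.card E hE rfl hE1 hexc t ht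
  intro n
  induction n using Nat.strong_induction_on with
  | _ n ih =>
    intro E hE hcard hE1 hexc t ht
    set t₁ := E.max' hE with ht₁
    have ht₁E : t₁ ∈ E := E.max'_mem hE
    obtain ⟨⟨ℓ, hkℓ⟩, habs⟩ := hexc t₁ ht₁E
    have h1t₁ : 1 ≤ t₁ := hE1 t₁ ht₁E
    have hn1 : 1 ≤ n := by rw [← hcard]; exact Finset.card_pos.mpr hE
    have hℓ : k + (n - 1) ≤ ℓ := by
      rcases eq_or_ne n 1 with h1 | hn1'
      · subst h1
        simpa using (hvalid t₁ _ hkℓ).2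
      · have hne : (E.erase t₁).Nonempty := by
          rw [← Finset.card_pos, Finset.card_erase_of_mem ht₁E, hcard]
          omega
        have hlt : (E.erase t₁).max' hne < t₁ := by
          have hm := (E.erase t₁).max'_mem hne
          have h1 := Finset.le_max' E _ (Finset.mem_of_mem_erase hm)
          have h2' := Finset.ne_of_mem_erase hm
          rw [← ht₁] at h1
          omega
        obtain ⟨a, b, hab, hak, hkb, hb⟩ := ih (n - 1) (by omega) (E.erase t₁) hne
          (by rw [Finset.card_erase_of_mem ht₁E, hcard])
          (fun s hs => hE1 s (Finset.mem_of_mem_erase hs))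
          (fun s hs => hexc s (Finset.mem_of_mem_erase hs)) t₁ hlt
        rcases le_or_gt ℓ b with h | h
        · obtain ⟨hka, hℓb⟩ := hmax t₁ k ℓ a b hkℓ hab hak h
          omega
        · omega
    obtain ⟨a', b', hm', ha', hb'⟩ := h3 t₁ h1t₁ k ℓ hkℓ
    have hane : a' ≠ k + 1 := fun h => habs ⟨b', h ▸ hm'⟩
    obtain ⟨a'', b'', hm'', ha'', hb''⟩ := h2 (t₁ + 1) t (by omega) (by omega) a' b' hm'
    exact ⟨a'', b'', hm'', by omega, by omega, by omega⟩
end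

section
/- Let {I(t)}_{t=1}^{n+1} be a family of sets of maximal closed integer intervals satisfying the three interval-family axioms, and suppose that every interval [k,ℓ] appearing in any I(t) satisfies ℓ ≤ k + δ·k for a fixed constant δ > 0 (i.e., (1+δ)-multiplicative approximation error). Then there exists a time t₀ ∈ {1,...,n+1} with |I(t₀)| = Ω(n^{1/3}). In particular, choosing h = Θ(n^{1/3}), each count k ≤ h can be exceptional at most δk times, so φ_h ≤ δh(h+1)/2, and (φ_h+1)h ≤ n holds for h = c·n^{1/3} with a suitable constant c > 0 depending on δ. -/
open Finset

namespace Stmt6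

def Exc (I : ℕ → Finset (ℕ × ℕ)) (t k : ℕ) : Prop :=
  (∃ ℓ, (k, ℓ) ∈ I t) ∧ ∀ ℓ', (k + 1, ℓ') ∉ I (t + 1)

variable {I : ℕ → Finset (ℕ × ℕ)} {n : ℕ}

lemma unique_right
    (hmax : ∀ t k ℓ k' ℓ', (k, ℓ) ∈ I t → (k', ℓ') ∈ I t → k' ≤ k → ℓ ≤ ℓ' → k = k' ∧ ℓ = ℓ')
    {t k ℓ ℓ'} (h1 : (k, ℓ) ∈ I t) (h2 : (k, ℓ') ∈ I t) : ℓ = ℓ' := by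
  rcases le_total ℓ ℓ' with h | h
  · exact (hmax t k ℓ k ℓ' h1 h2 le_rfl h).2
  · exact ((hmax t k ℓ' k ℓ h2 h1 le_rfl h).2).symm

lemma one_mem
    (hb : ∀ t kl, kl ∈ I t → 1 ≤ kl.1 ∧ kl.1 ≤ kl.2)
    (h1 : I 1 = {(1, 1)})
    (hmono : ∀ t t' : ℕ, 1 ≤ t → t ≤ t' → t' ≤ n + 1 → ∀ k ℓ, (k, ℓ) ∈ I t →
      ∃ k' ℓ', (k', ℓ') ∈ I t' ∧ k' ≤ k ∧ ℓ ≤ ℓ')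
    {t} (ht1 : 1 ≤ t) (ht2 : t ≤ n + 1) : ∃ ℓ, (1, ℓ) ∈ I t := by
  obtain ⟨k', ℓ', hm, hk, _⟩ := hmono 1 t le_rfl ht1 ht2 1 1 (by simp [h1])
  have hk1 : 1 ≤ k' := (hb t (k', ℓ') hm).1
  have : k' = 1 := le_antisymm hk hk1
  exact ⟨ℓ', by simpa [this] using hm⟩

/-- If `k` is exceptional at `t₁` and is a left endpoint at a later time `t₂ ≤ n+1`,
then the right endpoint strictly grew. -/
lemma right_grow
    (hmono : ∀ t t' : ℕ, 1 ≤ t → t ≤ t' → t' ≤ n + 1 → ∀ k ℓ, (k, ℓ) ∈ I t →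
      ∃ k' ℓ', (k', ℓ') ∈ I t' ∧ k' ≤ k ∧ ℓ ≤ ℓ')
    (hshift : ∀ t : ℕ, 1 ≤ t → t + 1 ≤ n + 1 → ∀ k ℓ, (k, ℓ) ∈ I t →
      ∃ k' ℓ', (k', ℓ') ∈ I (t + 1) ∧ k' ≤ k + 1 ∧ ℓ + 1 ≤ ℓ')
    (hmax : ∀ t k ℓ k' ℓ', (k, ℓ) ∈ I t → (k', ℓ') ∈ I t → k' ≤ k → ℓ ≤ ℓ' → k = k' ∧ ℓ = ℓ')
    {t₁ t₂ k ℓ₁ ℓ₂} (h1 : 1 ≤ t₁) (h12 : t₁ < t₂) (h2 : t₂ ≤ n + 1)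
    (hm1 : (k, ℓ₁) ∈ I t₁) (hexc : ∀ ℓ', (k + 1, ℓ') ∉ I (t₁ + 1))
    (hm2 : (k, ℓ₂) ∈ I t₂) : ℓ₁ + 1 ≤ ℓ₂ := by
  obtain ⟨k', ℓ', hm', hk', hl'⟩ := hshift t₁ h1 (by omega) k ℓ₁ hm1
  have hk'le : k' ≤ k := by
    rcases Nat.lt_or_ge k' (k + 1) with h | h
    · omega
    · have hke : k' = k + 1 := by omega
      exact absurd hm' (hke ▸ hexc ℓ')
  obtain ⟨k'', ℓ'', hm'', hk'', hl''⟩ := hmono (t₁ + 1) t₂ (by omega) (by omega) h2 k' ℓ' hm'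
  rcases le_total ℓ₂ ℓ'' with h | h
  · have := (hmax t₂ k ℓ₂ k'' ℓ'' hm2 hm'' (by omega) h).2
    omega
  · omega


open Classical in
/-- Each `k` is exceptional at most `⌊δk⌋ + 1` times. -/
lemma exc_card (δ : ℝ) (hδ : 0 ≤ δ)
    (hb : ∀ t kl, kl ∈ I t → 1 ≤ kl.1 ∧ kl.1 ≤ kl.2)
    (hmono : ∀ t t' : ℕ, 1 ≤ t → t ≤ t' → t' ≤ n + 1 → ∀ k ℓ, (k, ℓ) ∈ I t →
      ∃ k' ℓ', (k', ℓ') ∈ I t' ∧ k' ≤ k ∧ ℓ ≤ ℓ')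
    (hshift : ∀ t : ℕ, 1 ≤ t → t + 1 ≤ n + 1 → ∀ k ℓ, (k, ℓ) ∈ I t →
      ∃ k' ℓ', (k', ℓ') ∈ I (t + 1) ∧ k' ≤ k + 1 ∧ ℓ + 1 ≤ ℓ')
    (hmax : ∀ t k ℓ k' ℓ', (k, ℓ) ∈ I t → (k', ℓ') ∈ I t → k' ≤ k → ℓ ≤ ℓ' → k = k' ∧ ℓ = ℓ')
    (herr : ∀ t k ℓ, 1 ≤ t → t ≤ n + 1 → (k, ℓ) ∈ I t → (ℓ : ℝ) ≤ (k : ℝ) + δ * (k : ℝ))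
    (k : ℕ) :
    ((Icc 1 n).filter (fun t => Exc I t k)).card ≤ ⌊δ * (k : ℝ)⌋₊ + 1 := by
  set E := (Icc 1 n).filter (fun t => Exc I t k) with hE
  -- the right endpoint function
  have hg : ∀ t ∈ E, ∃ ℓ, (k, ℓ) ∈ I t := by
    intro t ht
    exact ((mem_filter.1 ht).2).1
  set g : ℕ → ℕ := fun t => if h : ∃ ℓ, (k, ℓ) ∈ I t then h.choose else 0 with hgdef
  have hgmem : ∀ t ∈ E, (k, g t) ∈ I t := by
    intro t ht
    have h := hg t ht
    simp only [hgdef, dif_pos h]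
    exact h.choose_spec
  have hmono' : ∀ t ∈ E, ∀ t' ∈ E, t < t' → g t < g t' := by
    intro t ht t' ht' htt
    have h1 : 1 ≤ t := (mem_Icc.1 (mem_filter.1 ht).1).1
    have h2 : t' ≤ n := (mem_Icc.1 (mem_filter.1 ht').1).2
    have hexc := ((mem_filter.1 ht).2).2
    have := right_grow hmono hshift hmax h1 htt (by omega) (hgmem t ht) hexc (hgmem t' ht')
    omega
  have hinj : Set.InjOn g E := by
    intro a ha b hb hab
    rcases lt_trichotomy a b with h | h | h
    · exact absurd hab (Nat.ne_of_lt (hmono' a ha b hb h))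
    · exact h
    · exact absurd hab.symm (Nat.ne_of_lt (hmono' b hb a ha h))
  have hsub : E.image g ⊆ Icc k (k + ⌊δ * (k : ℝ)⌋₊) := by
    intro x hx
    obtain ⟨t, ht, rfl⟩ := mem_image.1 hx
    have hkg : k ≤ g t := (hb t (k, g t) (hgmem t ht)).2
    have h1 : 1 ≤ t := (mem_Icc.1 (mem_filter.1 ht).1).1
    have h2 : t ≤ n := (mem_Icc.1 (mem_filter.1 ht).1).2
    have hub := herr t k (g t) h1 (by omega) (hgmem t ht)
    have : ((g t - k : ℕ) : ℝ) ≤ δ * k := by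
      push_cast [hkg]
      linarith
    have hfl : g t - k ≤ ⌊δ * (k : ℝ)⌋₊ := Nat.le_floor this
    exact mem_Icc.2 ⟨hkg, by omega⟩
  calc E.card = (E.image g).card := (Finset.card_image_of_injOn hinj).symm
    _ ≤ (Icc k (k + ⌊δ * (k : ℝ)⌋₊)).card := Finset.card_le_card hsub
    _ = ⌊δ * (k : ℝ)⌋₊ + 1 := by rw [Nat.card_Icc]; omega

/-- pigeonhole gap lemma -/
lemma gap {B : Finset ℕ} {n m w : ℕ} (hw : 1 ≤ w) (hmn : m * w ≤ n) (hB : B.card < m) :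
    ∃ t, 1 ≤ t ∧ t + w ≤ n + 1 ∧ ∀ τ, t ≤ τ → τ < t + w → τ ∉ B := by
  by_contra hcon
  push_neg at hcon
  have H : ∀ i : ℕ, ∃ τ, i < m → (1 + i * w ≤ τ ∧ τ < 1 + i * w + w ∧ τ ∈ B) := by
    intro i
    by_cases hi : i < m
    · obtain ⟨τ, h1, h2, h3⟩ := hcon (1 + i * w) (by omega)
        (by have : (i + 1) * w ≤ m * w := Nat.mul_le_mul_right w (by omega); nlinarith)
      exact ⟨τ, fun _ => ⟨h1, h2, h3⟩⟩
    · exact ⟨0, fun h => absurd h hi⟩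
  choose f hf using H
  have hcard : (range m).card ≤ B.card := by
    apply Finset.card_le_card_of_injOn f
    · intro i hi
      exact (hf i (mem_range.1 hi)).2.2
    · intro i hi j hj hij
      by_contra hne
      rcases lt_or_gt_of_ne hne with h | h
      · have h1 := (hf i (mem_range.1 hi)).2.1
        have h2 := (hf j (mem_range.1 hj)).1
        have : (i + 1) * w ≤ j * w := Nat.mul_le_mul_right w (by omega)
        nlinarith [hij]
      · have h1 := (hf j (mem_range.1 hj)).2.1
        have h2 := (hf i (mem_range.1 hi)).1
        have : (j + 1) * w ≤ i * w := Nat.mul_le_mul_right w (by omega)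
        nlinarith [hij]
  simp at hcard
  omega


/-- climbing inside an exception-free window -/
lemma climb {t w h : ℕ}
    (hnb : ∀ τ k, t ≤ τ → τ < t + w → 1 ≤ k → k ≤ h → ¬ Exc I τ k) :
    ∀ d s m, t ≤ s → s + d = t + w → 1 ≤ m → m + d ≤ h → (∃ ℓ, (m, ℓ) ∈ I s) →
      ∃ ℓ, (m + d, ℓ) ∈ I (t + w) := by
  intro d
  induction d with
  | zero => intro s m hts hsw _ _ hmem; simpa using (hsw ▸ hmem)
  | succ d ih =>
    intro s m hts hsw hm hmd hmem
    have hτ : s < t + w := by omega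
    have hnotexc := hnb s m hts hτ hm (by omega)
    rw [Exc, not_and_or] at hnotexc
    rcases hnotexc with h' | h'
    · exact absurd hmem h'
    · push_neg at h'
      obtain ⟨ℓ', hℓ'⟩ := h'
      have := ih (s + 1) (m + 1) (by omega) (by omega) (by omega) (by omega) ⟨ℓ', hℓ'⟩
      obtain ⟨ℓ, hℓ⟩ := this
      refine ⟨ℓ, ?_⟩
      have heq : m + 1 + d = m + (d + 1) := by omega
      rwa [heq] at hℓ

/-- An exception-free window of length `h - 1` produces `h` intervals. -/
lemma many_intervals
    (hb : ∀ t kl, kl ∈ I t → 1 ≤ kl.1 ∧ kl.1 ≤ kl.2)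
    (h1I : I 1 = {(1, 1)})
    (hmono : ∀ t t' : ℕ, 1 ≤ t → t ≤ t' → t' ≤ n + 1 → ∀ k ℓ, (k, ℓ) ∈ I t →
      ∃ k' ℓ', (k', ℓ') ∈ I t' ∧ k' ≤ k ∧ ℓ ≤ ℓ')
    {t w h : ℕ} (ht : 1 ≤ t) (htw : t + w ≤ n + 1) (hh : h = w + 1)
    (hnb : ∀ τ k, t ≤ τ → τ < t + w → 1 ≤ k → k ≤ h → ¬ Exc I τ k) :
    h ≤ (I (t + w)).card := by
  have hsub : Icc 1 h ⊆ (I (t + w)).image Prod.fst := by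
    intro j hj
    obtain ⟨hj1, hj2⟩ := mem_Icc.1 hj
    have hd : j - 1 ≤ w := by omega
    have hone : ∃ ℓ, (1, ℓ) ∈ I (t + (w - (j - 1))) :=
      one_mem hb h1I hmono (by omega) (by omega)
    have := climb hnb (j - 1) (t + (w - (j - 1))) 1 (by omega) (by omega) le_rfl
      (by omega) hone
    obtain ⟨ℓ, hℓ⟩ := this
    have hj' : 1 + (j - 1) = j := by omega
    rw [hj'] at hℓ
    exact mem_image.2 ⟨(j, ℓ), hℓ, rfl⟩
  calc h = (Icc 1 h).card := by rw [Nat.card_Icc]; omega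
    _ ≤ ((I (t + w)).image Prod.fst).card := Finset.card_le_card hsub
    _ ≤ (I (t + w)).card := Finset.card_image_le

end Stmt6

/-- For every `δ > 0` there is a constant `c > 0` (depending only on
`δ`) such that: for every `n ≥ 1` and every family `{I(t)}_{t=1}^{n+1}` of finite
sets of maximal closed integer intervals satisfying the three interval-family
axioms, if every interval `[k,ℓ]` appearing at a time `1 ≤ t ≤ n+1` satisfies
`ℓ ≤ (1+δ)·k` (a `(1+δ)`-multiplicative error bound), then there is a time
`t₀ ∈ {1,…,n+1}` with `|I(t₀)| ≥ c·n^{1/3}`. -/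
theorem stmt_6 (δ : ℝ) (hδ : 0 < δ) :
    ∃ c : ℝ, 0 < c ∧
      ∀ (n : ℕ), 1 ≤ n → ∀ I : ℕ → Finset (ℕ × ℕ),
        (∀ t kl, kl ∈ I t → 1 ≤ kl.1 ∧ kl.1 ≤ kl.2) →
        I 1 = {(1, 1)} →
        (∀ t t' : ℕ, 1 ≤ t → t ≤ t' → t' ≤ n + 1 → ∀ k ℓ, (k, ℓ) ∈ I t →
          ∃ k' ℓ', (k', ℓ') ∈ I t' ∧ k' ≤ k ∧ ℓ ≤ ℓ') →
        (∀ t : ℕ, 1 ≤ t → t + 1 ≤ n + 1 → ∀ k ℓ, (k, ℓ) ∈ I t →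
          ∃ k' ℓ', (k', ℓ') ∈ I (t + 1) ∧ k' ≤ k + 1 ∧ ℓ + 1 ≤ ℓ') →
        (∀ t k ℓ k' ℓ', (k, ℓ) ∈ I t → (k', ℓ') ∈ I t →
          k' ≤ k → ℓ ≤ ℓ' → k = k' ∧ ℓ = ℓ') →
        (∀ t k ℓ, 1 ≤ t → t ≤ n + 1 → (k, ℓ) ∈ I t → (ℓ : ℝ) ≤ (k : ℝ) + δ * (k : ℝ)) →
        ∃ t₀, 1 ≤ t₀ ∧ t₀ ≤ n + 1 ∧ c * (n : ℝ) ^ ((1 : ℝ) / 3) ≤ ((I t₀).card : ℝ) := by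
  classical
  have hδ2 : (0:ℝ) < δ + 2 := by linarith
  have hpow : (0:ℝ) < (δ + 2) ^ ((1:ℝ)/3) := Real.rpow_pos_of_pos hδ2 _
  refine ⟨1 / (2 * (δ + 2) ^ ((1:ℝ)/3)), by positivity, ?_⟩
  intro n hn I hb h1I hmono hshift hmax herr
  set x : ℝ := ((n:ℝ) / (δ + 2)) ^ ((1:ℝ)/3) with hxdef
  have hx0 : 0 ≤ x := Real.rpow_nonneg (by positivity) _
  set h : ℕ := max 1 ⌊x⌋₊ with hhdef
  have hh1 : 1 ≤ h := le_max_left _ _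
  have hxn : x = (n:ℝ) ^ ((1:ℝ)/3) / (δ + 2) ^ ((1:ℝ)/3) := by
    rw [hxdef]; exact Real.div_rpow (by positivity) (le_of_lt hδ2) _
  have hcx : 1 / (2 * (δ + 2) ^ ((1:ℝ)/3)) * (n:ℝ) ^ ((1:ℝ)/3) = x / 2 := by
    rw [hxn]; ring
  have hxh : x / 2 ≤ (h : ℝ) := by
    have hhcast : (1:ℝ) ≤ (h:ℝ) := by exact_mod_cast hh1
    rcases le_or_gt x 2 with hx2 | hx2
    · linarith
    · have hfl : x - 1 < (⌊x⌋₊ : ℝ) := Nat.sub_one_lt_floor x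
      have hfh : (⌊x⌋₊ : ℝ) ≤ (h : ℝ) := by exact_mod_cast le_max_right 1 ⌊x⌋₊
      linarith
  rcases eq_or_lt_of_le hh1 with hone | htwo
  · -- h = 1 : trivial witness t₀ = 1
    refine ⟨1, le_rfl, by omega, ?_⟩
    rw [hcx]
    have : (I 1).card = 1 := by rw [h1I]; simp
    rw [this]
    push_cast
    calc x / 2 ≤ (h : ℝ) := hxh
      _ = 1 := by rw [← hone]; norm_num
  -- main case : h ≥ 2
  have hfl2 : 2 ≤ ⌊x⌋₊ := by
    by_contra hcon
    have : h = 1 := by omega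
    omega
  have hhx : (h : ℝ) ≤ x := by
    have : h = ⌊x⌋₊ := by omega
    rw [this]
    exact Nat.floor_le hx0
  have hx3 : x ^ (3:ℕ) = (n:ℝ) / (δ + 2) := by
    rw [hxdef, ← Real.rpow_natCast (((n:ℝ) / (δ + 2)) ^ ((1:ℝ)/3)) 3,
      ← Real.rpow_mul (by positivity)]
    norm_num
  have hcube : (δ + 2) * (h:ℝ) ^ (3:ℕ) ≤ (n:ℝ) := by
    have h1 : (h:ℝ) ^ (3:ℕ) ≤ x ^ (3:ℕ) := by
      apply pow_le_pow_left₀ (by positivity) hhx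
    rw [hx3] at h1
    calc (δ + 2) * (h:ℝ) ^ (3:ℕ) ≤ (δ + 2) * ((n:ℝ) / (δ + 2)) := by
          exact mul_le_mul_of_nonneg_left h1 (le_of_lt hδ2)
      _ = (n:ℝ) := by field_simp
  -- the bad set
  set E : ℕ → Finset ℕ := fun k => (Icc 1 n).filter (fun t => Stmt6.Exc I t k) with hEdef
  set B : Finset ℕ := (Icc 1 n).filter (fun t => ∃ k, 1 ≤ k ∧ k ≤ h ∧ Stmt6.Exc I t k)
    with hBdef
  have hBsub : B ⊆ (Icc 1 h).biUnion E := by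
    intro t ht
    obtain ⟨htn, k, hk1, hk2, hexc⟩ := mem_filter.1 ht
    exact mem_biUnion.2 ⟨k, mem_Icc.2 ⟨hk1, hk2⟩, mem_filter.2 ⟨htn, hexc⟩⟩
  set Φ : ℕ := h * (⌊δ * (h:ℝ)⌋₊ + 1) with hΦdef
  have hBcard : B.card ≤ Φ := by
    calc B.card ≤ ((Icc 1 h).biUnion E).card := Finset.card_le_card hBsub
      _ ≤ ∑ k ∈ Icc 1 h, (E k).card := Finset.card_biUnion_le
      _ ≤ ∑ k ∈ Icc 1 h, (⌊δ * (h:ℝ)⌋₊ + 1) := by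
          apply Finset.sum_le_sum
          intro k hk
          have hkh : k ≤ h := (mem_Icc.1 hk).2
          have hEk : (E k).card ≤ ⌊δ * (k:ℝ)⌋₊ + 1 := by
            simp only [hEdef]
            exact Stmt6.exc_card δ (le_of_lt hδ) hb hmono hshift hmax herr k
          have hmono2 : ⌊δ * (k:ℝ)⌋₊ ≤ ⌊δ * (h:ℝ)⌋₊ := by
            apply Nat.floor_le_floor
            apply mul_le_mul_of_nonneg_left _ (le_of_lt hδ)
            exact_mod_cast hkh
          omega
      _ = h * (⌊δ * (h:ℝ)⌋₊ + 1) := by rw [Finset.sum_const, Nat.card_Icc]; simp [mul_comm]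
  -- arithmetic : (Φ + 1) * (h - 1) ≤ n
  have hΦreal : ((Φ:ℝ) + 1) * ((h:ℝ) - 1) ≤ (n:ℝ) := by
    have hfloor : (⌊δ * (h:ℝ)⌋₊ : ℝ) ≤ δ * h := Nat.floor_le (by positivity)
    have hΦle : (Φ:ℝ) ≤ (h:ℝ) * (δ * h + 1) := by
      rw [hΦdef]
      push_cast
      have : (0:ℝ) ≤ h := by positivity
      nlinarith
    have hh1r : (1:ℝ) ≤ (h:ℝ) := by exact_mod_cast hh1
    nlinarith [hcube, sq_nonneg ((h:ℝ) - 1), sq_nonneg (h:ℝ)]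
  have hmw : (Φ + 1) * (h - 1) ≤ n := by
    have hcast : (((Φ + 1) * (h - 1) : ℕ) : ℝ) = ((Φ:ℝ) + 1) * ((h:ℝ) - 1) := by
      push_cast [Nat.cast_sub hh1]
      ring
    exact_mod_cast hcast ▸ hΦreal
  obtain ⟨t, ht1, htw, hnoB⟩ := Stmt6.gap (B := B) (n := n) (m := Φ + 1) (w := h - 1)
    (by omega) hmw (by omega)
  have hnb : ∀ τ k, t ≤ τ → τ < t + (h - 1) → 1 ≤ k → k ≤ h → ¬ Stmt6.Exc I τ k := by
    intro τ k hτ1 hτ2 hk1 hk2 hexc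
    apply hnoB τ hτ1 hτ2
    refine mem_filter.2 ⟨mem_Icc.2 ⟨by omega, by omega⟩, k, hk1, hk2, hexc⟩
  have hmany : h ≤ (I (t + (h - 1))).card :=
    Stmt6.many_intervals hb h1I hmono ht1 (by omega) (by omega) hnb
  refine ⟨t + (h - 1), by omega, by omega, ?_⟩
  rw [hcx]
  have : (h : ℝ) ≤ ((I (t + (h - 1))).card : ℝ) := by exact_mod_cast hmany
  linarith
end

section
/- Suppose there exists a randomized streaming algorithm using S bits of space that is robust against white-box adversaries and solves a one-way two-player communication problem f : X × Y → Z with success probability p > 1/2 against all adaptive inputs. Then there exists a deterministic one-way protocol for f using S bits of communication. Formally: let M be a matrix with rows indexed by (x, r_x) and columns by (y, r_y), such that the row index determines an S-bit state state(x, r_x) ∈ {0,1}^S with M_{(x,r_x),(y,r_y)} depending only on (state(x,r_x), y, r_y), and suppose for every x, E_{r_x}[min_y Pr_{r_y}[M_{(x,r_x),(y,r_y)} = f(x,y)]] ≥ p. Then there is a function D : X → {0,1}^S and a function B : {0,1}^S × Y → Z with B(D(x), y) = f(x, y) for all x, y. -/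
/-- If a randomized `S`-bit one-way protocol (arising from a
white-box adversarially robust streaming algorithm) computes `f : X × Y → Z`
with success probability `p > 1/2` against the worst-case adaptive choice of
Bob's input (in expectation over Alice's randomness), then there is a
deterministic one-way protocol for `f` using `S` bits of communication. -/
theorem stmt_8 {X Y Z Rx Ry : Type}
    [Fintype X] [Fintype Y] [Fintype Rx] [Fintype Ry]
    [Nonempty Y] [Nonempty Rx] [Nonempty Ry] [DecidableEq Z]
    (S : ℕ) (state : X → Rx → (Fin S → Bool))
    (M : (Fin S → Bool) → Y → Ry → Z) (f : X → Y → Z)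
    (p : ℝ) (hp : 1 / 2 < p)
    (hrob : ∀ x : X, p ≤
      (∑ rx : Rx, Finset.univ.inf' Finset.univ_nonempty (fun y : Y =>
          ((Finset.univ.filter fun ry : Ry => M (state x rx) y ry = f x y).card : ℝ) /
            (Fintype.card Ry : ℝ))) / (Fintype.card Rx : ℝ)) :
    ∃ (D : X → (Fin S → Bool)) (B : (Fin S → Bool) → Y → Z),
      ∀ x y, B (D x) y = f x y := by
  classical
  have hZ : Nonempty Z :=
    ⟨M (Classical.arbitrary _) (Classical.arbitrary _) (Classical.arbitrary _)⟩
  set B : (Fin S → Bool) → Y → Z := fun s y =>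
    if h : ∃ z : Z,
        Fintype.card Ry < 2 * (Finset.univ.filter fun ry : Ry => M s y ry = z).card
    then h.choose else Classical.arbitrary Z with hB
  have hBspec : ∀ s y z,
      Fintype.card Ry < 2 * (Finset.univ.filter fun ry : Ry => M s y ry = z).card →
      B s y = z := by
    intro s y z hz
    have h : ∃ z : Z,
        Fintype.card Ry < 2 * (Finset.univ.filter fun ry : Ry => M s y ry = z).card := ⟨z, hz⟩
    have h1 := h.choose_spec
    have hBval : B s y = h.choose := by simp only [hB, dif_pos h]
    rw [hBval]
    by_contra hne
    have hdisj : Disjoint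
        (Finset.univ.filter fun ry : Ry => M s y ry = h.choose)
        (Finset.univ.filter fun ry : Ry => M s y ry = z) := by
      rw [Finset.disjoint_left]
      intro a ha hb
      simp only [Finset.mem_filter] at ha hb
      exact hne (ha.2 ▸ hb.2 ▸ rfl)
    have hcard := Finset.card_union_of_disjoint hdisj
    have hle : ((Finset.univ.filter fun ry : Ry => M s y ry = h.choose) ∪
        (Finset.univ.filter fun ry : Ry => M s y ry = z)).card ≤ Fintype.card Ry :=
      Finset.card_le_card (Finset.subset_univ _)
    omega
  have hx : ∀ x : X, ∃ rx : Rx,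
      (1 : ℝ) / 2 < Finset.univ.inf' Finset.univ_nonempty (fun y : Y =>
          ((Finset.univ.filter fun ry : Ry => M (state x rx) y ry = f x y).card : ℝ) /
            (Fintype.card Ry : ℝ)) := by
    intro x
    by_contra hcon
    push_neg at hcon
    have hsum : (∑ rx : Rx, Finset.univ.inf' Finset.univ_nonempty (fun y : Y =>
          ((Finset.univ.filter fun ry : Ry => M (state x rx) y ry = f x y).card : ℝ) /
            (Fintype.card Ry : ℝ))) ≤ (Fintype.card Rx : ℝ) * (1 / 2) := by
      calc _ ≤ ∑ _rx : Rx, (1 : ℝ) / 2 := Finset.sum_le_sum fun rx _ => hcon rx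
        _ = (Fintype.card Rx : ℝ) * (1 / 2) := by
          rw [Finset.sum_const, Finset.card_univ, nsmul_eq_mul]
    have hRx : (0 : ℝ) < (Fintype.card Rx : ℝ) := by
      exact_mod_cast Fintype.card_pos
    have := hrob x
    have hdiv : (∑ rx : Rx, Finset.univ.inf' Finset.univ_nonempty (fun y : Y =>
          ((Finset.univ.filter fun ry : Ry => M (state x rx) y ry = f x y).card : ℝ) /
            (Fintype.card Ry : ℝ))) / (Fintype.card Rx : ℝ) ≤ 1 / 2 := by
      rw [div_le_iff₀ hRx]
      linarith [hsum]
    linarith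
  refine ⟨fun x => state x (hx x).choose, B, fun x y => ?_⟩
  have hinf := (hx x).choose_spec
  have hterm : (1 : ℝ) / 2 <
      ((Finset.univ.filter fun ry : Ry =>
        M (state x (hx x).choose) y ry = f x y).card : ℝ) / (Fintype.card Ry : ℝ) :=
    lt_of_lt_of_le hinf (Finset.inf'_le _ (Finset.mem_univ y))
  have hRy : (0 : ℝ) < (Fintype.card Ry : ℝ) := by exact_mod_cast Fintype.card_pos
  have hnat : Fintype.card Ry < 2 * (Finset.univ.filter fun ry : Ry =>
      M (state x (hx x).choose) y ry = f x y).card := by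
    have : (Fintype.card Ry : ℝ) < 2 * ((Finset.univ.filter fun ry : Ry =>
        M (state x (hx x).choose) y ry = f x y).card : ℝ) := by
      rw [lt_div_iff₀ hRy] at hterm
      linarith
    exact_mod_cast this
  exact hBspec _ _ _ hnat
end

section
/- Let A be an n × n integer matrix with entries bounded by M in absolute value, let k ≤ n, let q > (nM)^k be a modulus, and let H ∈ ℤ_q^{k×n}. If rank(A) < k over ℚ, then there exists a nonzero integer vector x with ‖x‖_∞ ≤ (nM)^k such that Ax = 0 over ℤ, and consequently HAx ≡ 0 (mod q) while x ≢ 0 (mod q). -/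
attribute [local instance] Matrix.seminormedAddCommGroup

open Matrix Submodule Module

/-- Auxiliary: if the rational row space of `A` has rank `< k` and `A ≠ 0`, with `1 ≤ k - 1 < n`,
there is a row-selection `ρ : Fin (k-1) → Fin n` whose rows span the row space. -/
lemma aux_row_select (n k : ℕ) (hk : k ≤ n)
    (A : Matrix (Fin n) (Fin n) ℤ) (hA0 : A ≠ 0)
    (hrank : (A.map ((↑) : ℤ → ℚ)).rank < k) :
    2 ≤ k ∧ ∃ ρ : Fin (k - 1) → Fin n, ∀ i, (A.map ((↑) : ℤ → ℚ)) i ∈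
      span ℚ (Set.range fun l : Fin (k - 1) => (A.map ((↑) : ℤ → ℚ)) (ρ l)) := by
  classical
  set Aq := A.map ((↑) : ℤ → ℚ) with hAq
  set f : Fin n → (Fin n → ℚ) := fun i => Aq i with hfdef
  obtain ⟨s, hs_sub, hs_span, hs_ind⟩ := exists_linearIndependent ℚ (Set.range f)
  have hsfin : s.Finite := hs_ind.setFinite
  haveI : Fintype s := hsfin.fintype
  have hcard : finrank ℚ (span ℚ s) = s.toFinset.card := finrank_span_set_eq_card hs_ind
  have hrow : Aq.rank = finrank ℚ (span ℚ (Set.range f)) := Aq.rank_eq_finrank_span_row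
  have hcard_rank : s.toFinset.card = Aq.rank := by
    rw [hrow, ← hs_span, hcard]
  -- rank is at least 1
  have hrank1 : 1 ≤ Aq.rank := by
    rcases Nat.eq_zero_or_pos Aq.rank with h' | h'
    · exfalso
      have hfr : finrank ℚ (span ℚ (Set.range f)) = 0 := by rw [← hrow]; exact h'
      have hspan_bot : span ℚ (Set.range f) = ⊥ := Submodule.finrank_eq_zero.mp hfr
      apply hA0
      ext i j
      have hmem : f i ∈ span ℚ (Set.range f) := subset_span (Set.mem_range_self i)
      rw [hspan_bot, Submodule.mem_bot] at hmem
      have : (A i j : ℚ) = 0 := congrFun hmem j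
      exact_mod_cast this
    · exact h'
  have hk2 : 2 ≤ k := by omega
  refine ⟨hk2, ?_⟩
  set m := k - 1 with hm
  have hr_le_m : s.toFinset.card ≤ m := by omega
  have hr_pos : 0 < Fintype.card s := by
    rw [← Set.toFinset_card]; omega
  choose g hg using fun v : s => (hs_sub v.2 : v.1 ∈ Set.range f)
  let e : s ≃ Fin (Fintype.card s) := Fintype.equivFin s
  set ρ : Fin m → Fin n := fun i => g (e.symm ⟨i.1 % Fintype.card s, Nat.mod_lt _ hr_pos⟩) with hρ
  have hsub2 : s ⊆ Set.range (fun l : Fin m => f (ρ l)) := by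
    intro v hv
    have hlt : ((e ⟨v, hv⟩) : Fin (Fintype.card s)).1 < m := by
      have := (e ⟨v, hv⟩).2
      have hcards : Fintype.card s = s.toFinset.card := (Set.toFinset_card s).symm
      omega
    refine ⟨⟨(e ⟨v, hv⟩).1, hlt⟩, ?_⟩
    have hmod : (e ⟨v, hv⟩).1 % Fintype.card s = (e ⟨v, hv⟩).1 :=
      Nat.mod_eq_of_lt (e ⟨v, hv⟩).2
    simp only [hρ]
    have : (⟨(e ⟨v, hv⟩).1 % Fintype.card s, Nat.mod_lt _ hr_pos⟩ : Fin (Fintype.card s))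
        = e ⟨v, hv⟩ := Fin.ext hmod
    rw [this, Equiv.symm_apply_apply]
    exact hg ⟨v, hv⟩
  refine ⟨ρ, fun i => ?_⟩
  have h1 : f i ∈ span ℚ s := by
    rw [hs_span]; exact subset_span (Set.mem_range_self i)
  exact span_mono hsub2 h1

theorem stmt_13_aux (n k M : ℕ) (hn : 1 ≤ n) (hM : 1 ≤ M) (hk : k ≤ n)
    (A : Matrix (Fin n) (Fin n) ℤ)
    (hbound : ∀ i j, |A i j| ≤ (M : ℤ))
    (hrank : (A.map ((↑) : ℤ → ℚ)).rank < k) :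
    ∃ x : Fin n → ℤ, x ≠ 0 ∧ (∀ i, |x i| ≤ ((n * M : ℕ) : ℤ) ^ k) ∧
      A.mulVec x = 0 := by
  classical
  have hpow1 : (1 : ℤ) ≤ ((n * M : ℕ) : ℤ) ^ k := by
    have h1 : (1 : ℤ) ≤ ((n * M : ℕ) : ℤ) := by
      have : 1 ≤ n * M := Nat.one_le_iff_ne_zero.mpr (by positivity)
      exact_mod_cast this
    exact one_le_pow₀ h1
  by_cases hA0 : A = 0
  · refine ⟨Pi.single ⟨0, hn⟩ 1, ?_, ?_, ?_⟩
    · intro h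
      have := congrFun h ⟨0, hn⟩
      simp at this
    · intro i
      rcases eq_or_ne i ⟨0, hn⟩ with h | h
      · subst h; simpa using hpow1
      · rw [Pi.single_apply, if_neg h]
        simpa using le_trans zero_le_one hpow1
    · subst hA0
      funext i
      simp [Matrix.mulVec]
  · obtain ⟨hk2, ρ, hspan⟩ := aux_row_select n k hk A hA0 hrank
    have hm1 : 1 ≤ k - 1 := by omega
    have hmn : k - 1 < n := by omega
    set A' : Matrix (Fin (k - 1)) (Fin n) ℤ := A.submatrix ρ id with hA'
    obtain ⟨t, ht0, htsol, htnorm⟩ := Int.Matrix.exists_ne_zero_int_vec_norm_le A'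
      (by simpa using hmn) (by simp only [Fintype.card_fin]; omega)
    refine ⟨t, ht0, ?_, ?_⟩
    · -- entry bound
      intro i
      have hA'M : ‖A'‖ ≤ (M : ℝ) := by
        rw [Matrix.norm_le_iff (by positivity)]
        intro a b
        rw [hA']
        simp only [Matrix.submatrix_apply, id]
        rw [Int.norm_eq_abs]
        exact_mod_cast hbound (ρ a) b
      have hmaxM : max 1 ‖A'‖ ≤ (M : ℝ) := max_le (by exact_mod_cast hM) hA'M
      have hMpos : (0:ℝ) ≤ (M:ℝ) := by positivity
      set ee : ℝ := ((Fintype.card (Fin (k - 1)) : ℝ)) / ((Fintype.card (Fin n) : ℝ)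
        - (Fintype.card (Fin (k - 1)) : ℝ)) with hee
      have hnm : (1:ℝ) ≤ (Fintype.card (Fin n) : ℝ) - (Fintype.card (Fin (k - 1)) : ℝ) := by
        simp only [Fintype.card_fin]
        have h3 : ((k - 1 : ℕ) : ℝ) + 1 ≤ (n:ℝ) := by exact_mod_cast hmn
        push_cast
        push_cast at h3
        linarith
      have hee_nonneg : 0 ≤ ee := by
        rw [hee]
        apply div_nonneg (by positivity)
        linarith
      have heek : ee ≤ (k : ℝ) := by
        rw [hee]
        calc (Fintype.card (Fin (k - 1)) : ℝ) / ((Fintype.card (Fin n) : ℝ) - (Fintype.card (Fin (k - 1)) : ℝ))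
            ≤ (Fintype.card (Fin (k - 1)) : ℝ) := div_le_self (by positivity) hnm
          _ ≤ (k : ℝ) := by simp only [Fintype.card_fin]; exact_mod_cast Nat.le_of_lt (by omega)
      have hbase : ((Fintype.card (Fin n) : ℝ)) * max 1 ‖A'‖ ≤ (n : ℝ) * (M : ℝ) := by
        simp only [Fintype.card_fin]
        have hn0 : (0:ℝ) ≤ (n:ℝ) := by positivity
        exact mul_le_mul_of_nonneg_left hmaxM hn0
      have h1base : (1:ℝ) ≤ (n : ℝ) * (M : ℝ) := by
        have : (1:ℝ) ≤ (n:ℝ) := by exact_mod_cast hn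
        have h2 : (1:ℝ) ≤ (M:ℝ) := by exact_mod_cast hM
        nlinarith
      have step : ‖t‖ ≤ ((n : ℝ) * (M : ℝ)) ^ ee :=
        le_trans htnorm (Real.rpow_le_rpow (by positivity) hbase hee_nonneg)
      have step2 : ((n : ℝ) * (M : ℝ)) ^ ee ≤ ((n : ℝ) * (M : ℝ)) ^ (k : ℝ) :=
        Real.rpow_le_rpow_of_exponent_le h1base heek
      have hfin : ‖t i‖ ≤ ((n : ℝ) * (M : ℝ)) ^ (k : ℕ) := by
        rw [← Real.rpow_natCast]
        exact le_trans (norm_le_pi_norm t i) (step.trans step2)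
      rw [Int.norm_eq_abs] at hfin
      have : |(t i : ℝ)| ≤ (((n * M : ℕ) : ℝ)) ^ k := by push_cast; push_cast at hfin; exact hfin
      exact_mod_cast this
    · -- A.mulVec t = 0
      funext i
      obtain ⟨c, hc⟩ := (mem_span_range_iff_exists_fun ℚ).mp (hspan i)
      have hrow0 : ∀ l : Fin (k - 1), ∑ j, (A (ρ l) j : ℚ) * (t j : ℚ) = 0 := by
        intro l
        have h0 : A'.mulVec t l = 0 := by rw [htsol]; rfl
        have h1 : ((∑ j, A' l j * t j : ℤ) : ℚ) = 0 := by
          rw [show (∑ j, A' l j * t j) = A'.mulVec t l from rfl, h0]; simp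
        push_cast at h1
        simpa [hA', Matrix.submatrix_apply] using h1
      have key : ∑ j, (A i j : ℚ) * (t j : ℚ) = 0 := by
        have hcj : ∀ jj, (A i jj : ℚ) = ∑ l, c l * (A (ρ l) jj : ℚ) := by
          intro jj
          have h2 := congrFun hc jj
          simp only [Finset.sum_apply, Pi.smul_apply, Matrix.map_apply, smul_eq_mul] at h2
          exact h2.symm
        calc ∑ j, (A i j : ℚ) * (t j : ℚ)
            = ∑ j, (∑ l, c l * (A (ρ l) j : ℚ)) * (t j : ℚ) :=
              Finset.sum_congr rfl fun j _ => by rw [hcj j]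
          _ = ∑ j, ∑ l, c l * (A (ρ l) j : ℚ) * (t j : ℚ) :=
              Finset.sum_congr rfl fun j _ => Finset.sum_mul _ _ _
          _ = ∑ l, ∑ j, c l * (A (ρ l) j : ℚ) * (t j : ℚ) := Finset.sum_comm
          _ = ∑ l, c l * ∑ j, (A (ρ l) j : ℚ) * (t j : ℚ) := by
              refine Finset.sum_congr rfl fun l _ => ?_
              rw [Finset.mul_sum]
              exact Finset.sum_congr rfl fun j _ => by ring
          _ = 0 := by simp [hrow0]
      have hfin : ((A.mulVec t i : ℤ) : ℚ) = 0 := by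
        simp only [Matrix.mulVec, dotProduct]
        push_cast
        exact key
      exact_mod_cast hfin

/-- completeness of the streaming rank-decision test: If `A` is an
`n × n` integer matrix with entries bounded by `M ≥ 1`, `k ≤ n`, `q > (nM)^k`, and
`rank(A) < k` over `ℚ`, then there is a nonzero integer vector `x` with
`‖x‖_∞ ≤ (nM)^k`, `Ax = 0` over `ℤ`, hence `HAx ≡ 0 (mod q)` for any
`H ∈ ℤ_q^{k×n}`, while `x ≢ 0 (mod q)`. -/
theorem stmt_13 (n k M q : ℕ) (hn : 1 ≤ n) (hM : 1 ≤ M) (hk : k ≤ n)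
    (hq : (n * M) ^ k < q)
    (A : Matrix (Fin n) (Fin n) ℤ)
    (hbound : ∀ i j, |A i j| ≤ (M : ℤ))
    (H : Matrix (Fin k) (Fin n) (ZMod q))
    (hrank : (A.map ((↑) : ℤ → ℚ)).rank < k) :
    ∃ x : Fin n → ℤ, x ≠ 0 ∧ (∀ i, |x i| ≤ ((n * M : ℕ) : ℤ) ^ k) ∧
      A.mulVec x = 0 ∧
      H.mulVec ((A.map (fun a => (a : ZMod q))).mulVec fun i => ((x i : ℤ) : ZMod q)) = 0 ∧
      ∃ i, ((x i : ℤ) : ZMod q) ≠ 0 := by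
  classical
  obtain ⟨x, hx0, hxb, hxA⟩ := stmt_13_aux n k M hn hM hk A hbound hrank
  refine ⟨x, hx0, hxb, hxA, ?_, ?_⟩
  · have hmap : (A.map (fun a : ℤ => (a : ZMod q))).mulVec (fun i => ((x i : ℤ) : ZMod q)) = 0 := by
      funext i
      have h0 : A.mulVec x i = 0 := by rw [hxA]; rfl
      have h1 : ((A.mulVec x i : ℤ) : ZMod q) = 0 := by rw [h0]; simp
      simpa [Matrix.mulVec, dotProduct, Matrix.map_apply, Int.cast_sum, Int.cast_mul]
        using h1
    rw [hmap, Matrix.mulVec_zero]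
  · obtain ⟨i, hi⟩ := Function.ne_iff.mp hx0
    refine ⟨i, fun hcast => ?_⟩
    have hdvd : (q : ℤ) ∣ x i := (ZMod.intCast_zmod_eq_zero_iff_dvd _ _).mp hcast
    have habs : (q : ℤ) ≤ |x i| := Int.le_of_dvd (abs_pos.mpr hi) ((dvd_abs _ _).mpr hdvd)
    have hlt : |x i| < (q : ℤ) := lt_of_le_of_lt (hxb i) (by exact_mod_cast hq)
    omega
end
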